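/- In the star network with root p_1 and n−1 leaves, all inputs equal to 1, starting from configuration C_i (where sub(p_1) = i, sub(p_j) = 1 for 2 ≤ j ≤ i, sub(p_j) = 0 for j > i, and res(p_j) = i for all j) with 1 ≤ i ≤ n−1, the sequential schedule 'S(p_{i+1}); S(p_1); R(p_1); R(p_2); …; R(p_n)' is a valid execution fragment of 𝒯ℰ (each action is enabled when scheduled) and leads to configuration C_{i+1}. -/

import Mathlib

namespace TEStar

/-- Children in the star rooted at 0: the root's children are all other vertices. -/
def children (n : ℕ) [NeZero n] (p : Fin n) : Finset (Fin n) :=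
  if p = 0 then Finset.univ.erase 0 else ∅

/-- A configuration: the sub-values and the res-values. -/
abbrev Cfg (n : ℕ) := (Fin n → ℕ) × (Fin n → ℕ)

/-- An action: (true, p) is S(p), (false, p) is R(p). -/
abbrev Act (n : ℕ) := Bool × Fin n

/-- Value written by S(p) (all inputs equal 1). -/
def sTarget (n : ℕ) [NeZero n] (c : Cfg n) (p : Fin n) : ℕ :=
  1 + ∑ q ∈ children n p, c.1 q

/-- Value written by R(p) (the parent of any non-root vertex is the root 0). -/
def rTarget (n : ℕ) [NeZero n] (c : Cfg n) (p : Fin n) : ℕ :=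
  if p = 0 then c.1 0 else max (c.2 0) (c.1 p)

/-- Guard of an action. -/
def enabled (n : ℕ) [NeZero n] (c : Cfg n) (a : Act n) : Prop :=
  if a.1 then c.1 a.2 ≠ sTarget n c a.2 else c.2 a.2 ≠ rTarget n c a.2

/-- Effect of an action. -/
def applyAct (n : ℕ) [NeZero n] (c : Cfg n) (a : Act n) : Cfg n :=
  if a.1 then (Function.update c.1 a.2 (sTarget n c a.2), c.2)
  else (c.1, Function.update c.2 a.2 (rTarget n c a.2))

/-- A schedule is a valid (central-daemon) execution fragment from `c` when each
listed action is enabled in the configuration at which it is executed. -/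
def valid (n : ℕ) [NeZero n] : Cfg n → List (Act n) → Prop
  | _, [] => True
  | c, a :: t => enabled n c a ∧ valid n (applyAct n c a) t

/-- Resulting configuration after running a schedule. -/
def run (n : ℕ) [NeZero n] (c : Cfg n) (l : List (Act n)) : Cfg n :=
  l.foldl (applyAct n) c

/-- Configuration C_i: sub(p₁) = i, sub(p_j) = 1 for 2 ≤ j ≤ i, sub(p_j) = 0 for
j > i, res ≡ i (here vertex v : Fin n stands for process p_{v+1}). -/
def C (n : ℕ) [NeZero n] (i : ℕ) : Cfg n :=
  (fun j => if j = 0 then i else if (j : ℕ) < i then 1 else 0, fun _ => i)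

/-- Starting from C_i (1 ≤ i ≤ n−1), the schedule
S(p_{i+1}); S(p₁); R(p₁); R(p₂); …; R(p_n) is a valid execution fragment of 𝒯ℰ
and leads to configuration C_{i+1}. -/
/- helper rfl lemmas -/
lemma applyAct_S (n : ℕ) [NeZero n] (c : Cfg n) (p : Fin n) :
    applyAct n c (true, p) = (Function.update c.1 p (sTarget n c p), c.2) := rfl

lemma applyAct_R (n : ℕ) [NeZero n] (c : Cfg n) (p : Fin n) :
    applyAct n c (false, p) = (c.1, Function.update c.2 p (rTarget n c p)) := rfl

lemma enabled_S (n : ℕ) [NeZero n] (c : Cfg n) (p : Fin n) :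
    enabled n c (true, p) ↔ c.1 p ≠ sTarget n c p := Iff.rfl

lemma enabled_R (n : ℕ) [NeZero n] (c : Cfg n) (p : Fin n) :
    enabled n c (false, p) ↔ c.2 p ≠ rTarget n c p := Iff.rfl

lemma run_cons (n : ℕ) [NeZero n] (c : Cfg n) (a : Act n) (l : List (Act n)) :
    run n c (a :: l) = run n (applyAct n c a) l := rfl

lemma sum_ind (n k : ℕ) [NeZero n] (hk : k ≤ n) :
    ∑ q : Fin n, (if (q : ℕ) < k then 1 else 0) = k := by
  rw [Fin.sum_univ_eq_sum_range (fun j => if j < k then 1 else 0)]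
  rw [← Finset.sum_subset (Finset.range_subset_range.2 hk)
    (fun x _ hx => if_neg (by simpa using hx))]
  rw [Finset.sum_congr rfl (fun x hx => if_pos (Finset.mem_range.1 hx))]
  simp

lemma sub_le (n i : ℕ) [NeZero n] (j : Fin n) (hj : j ≠ 0) : (C n (i+1)).1 j ≤ 1 := by
  simp only [C, if_neg hj]
  split <;> simp

lemma aux (n i : ℕ) [NeZero n] (hi : 1 ≤ i) :
    ∀ (l : List (Fin n)) (r : Fin n → ℕ), l.Nodup → (0 : Fin n) ∉ l →
      r 0 = i + 1 → (∀ j ∈ l, r j = i) →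
      valid n ((C n (i+1)).1, r) (l.map (fun j => (false, j))) ∧
      run n ((C n (i+1)).1, r) (l.map (fun j => (false, j))) =
        ((C n (i+1)).1, fun j => if j ∈ l then i + 1 else r j) := by
  intro l
  induction l with
  | nil => intro r _ _ _ _; exact ⟨trivial, by simp [run]⟩
  | cons a t ih =>
    intro r hnd h0 hr0 hrl
    have ha0 : a ≠ 0 := fun h => h0 (h ▸ (List.mem_cons.2 (Or.inl rfl) : a ∈ a :: t))
    have htar : rTarget n ((C n (i+1)).1, r) a = i + 1 := by
      simp only [rTarget, if_neg ha0]
      have := sub_le n i a ha0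
      simp only [hr0]
      omega
    have hen : enabled n ((C n (i+1)).1, r) (false, a) := by
      rw [enabled_R]
      show r a ≠ _
      rw [htar, hrl a (List.mem_cons.2 (Or.inl rfl))]
      omega
    have happ : applyAct n ((C n (i+1)).1, r) (false, a) =
        ((C n (i+1)).1, Function.update r a (i + 1)) := by
      rw [applyAct_R, htar]
    have ih' := ih (Function.update r a (i + 1)) hnd.of_cons
      (fun h => h0 (List.mem_cons_of_mem a h))
      (by rw [Function.update_of_ne (Ne.symm ha0)]; exact hr0)
      (fun j hj => by
        rw [Function.update_of_ne (fun h => (List.nodup_cons.1 hnd).1 (by subst h; exact hj))]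
        exact hrl j (List.mem_cons_of_mem a hj))
    refine ⟨⟨hen, ?_⟩, ?_⟩
    · rw [happ]; exact ih'.1
    · rw [List.map_cons, run_cons, happ, ih'.2]
      refine Prod.ext rfl ?_
      show (fun j => if j ∈ t then i + 1 else Function.update r a (i+1) j) =
        fun j => if j ∈ a :: t then i + 1 else r j
      funext j
      by_cases hja : j = a
      · subst hja; simp
      · by_cases hjt : j ∈ t <;>
          simp [hjt, hja, Function.update_of_ne hja, List.mem_cons]

theorem stmt18 (n i : ℕ) [NeZero n] (hn : 2 ≤ n) (hi1 : 1 ≤ i) (hi2 : i ≤ n - 1) :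
    valid n (C n i)
      ((true, (⟨i, by omega⟩ : Fin n)) :: (true, 0) ::
        (List.finRange n).map (fun j => (false, j))) ∧
    run n (C n i)
      ((true, (⟨i, by omega⟩ : Fin n)) :: (true, 0) ::
        (List.finRange n).map (fun j => (false, j))) = C n (i + 1) := by
  have hin : i < n := by omega
  set v : Fin n := ⟨i, hin⟩ with hv
  have hv0 : v ≠ 0 := by
    simp [hv, Fin.ext_iff]; omega
  -- step 1 : S(v)
  have hs1 : sTarget n (C n i) v = 1 := by
    simp [sTarget, children, if_neg hv0]
  have hCv : (C n i).1 v = 0 := by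
    simp only [C, if_neg hv0]
    rw [if_neg]
    simp [hv]
  have he1 : enabled n (C n i) (true, v) := by
    rw [enabled_S, hs1, hCv]; omega
  have ha1 : applyAct n (C n i) (true, v) =
      ((fun j => if j = 0 then i else if (j : ℕ) < i + 1 then 1 else 0, fun _ => i) : Cfg n) := by
    rw [applyAct_S, hs1]
    refine Prod.ext ?_ rfl
    show Function.update (C n i).1 v 1 = _
    funext j
    by_cases hjv : j = v
    · subst hjv
      rw [Function.update_self]
      show 1 = if v = 0 then i else if (v:ℕ) < i + 1 then 1 else 0
      rw [if_neg hv0, if_pos (by simp [hv])]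
    · rw [Function.update_of_ne hjv]
      simp only [C]
      by_cases hj0 : j = 0
      · simp [hj0]
      · simp only [if_neg hj0]
        have : (j : ℕ) ≠ i := fun h => hjv (Fin.ext h)
        by_cases hlt : (j : ℕ) < i
        · rw [if_pos hlt, if_pos (by omega)]
        · rw [if_neg hlt, if_neg (by omega)]
  set c1 : Cfg n :=
    ((fun j => if j = 0 then i else if (j : ℕ) < i + 1 then 1 else 0 : Fin n → ℕ), fun _ => i)
    with hc1
  -- step 2 : S(0)
  have hch : children n (0 : Fin n) = Finset.univ.erase 0 := by
    rw [children, if_pos rfl]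
  have hs2 : sTarget n c1 0 = 1 + i := by
    rw [sTarget, hch]
    congr 1
    have hcongr : ∀ q ∈ Finset.univ.erase (0 : Fin n), c1.1 q =
        (if (q : ℕ) < i + 1 then 1 else 0) := by
      intro q hq
      have hq0 : q ≠ 0 := (Finset.mem_erase.1 hq).1
      simp [hc1, if_neg hq0]
    rw [Finset.sum_congr rfl hcongr]
    have hsum := sum_ind n (i + 1) (by omega)
    rw [← Finset.sum_erase_add _ _ (Finset.mem_univ (0 : Fin n))] at hsum
    rw [if_pos (show ((0 : Fin n) : ℕ) < i + 1 by simp)] at hsum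
    omega
  have hc10 : c1.1 0 = i := by simp [hc1]
  have he2 : enabled n c1 (true, 0) := by
    rw [enabled_S, hs2, hc10]; omega
  have ha2 : applyAct n c1 (true, 0) = ((C n (i+1)).1, fun _ => i) := by
    rw [applyAct_S, hs2]
    refine Prod.ext ?_ rfl
    show Function.update c1.1 0 (1 + i) = (C n (i+1)).1
    funext j
    by_cases hj0 : j = 0
    · subst hj0; simp [C]; omega
    · rw [Function.update_of_ne hj0]
      simp [hc1, C, if_neg hj0]
  set c2 : Cfg n := ((C n (i+1)).1, fun _ => i) with hc2
  -- step 3 : R(0)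
  obtain ⟨m, rfl⟩ : ∃ m, n = m + 1 := ⟨n - 1, by omega⟩
  have hfr : List.finRange (m + 1) = 0 :: (List.finRange m).map Fin.succ :=
    List.finRange_succ
  have hr3 : rTarget (m+1) c2 0 = i + 1 := by
    simp [rTarget, hc2, C]
  have he3 : enabled (m+1) c2 (false, 0) := by
    rw [enabled_R, hr3]
    show i ≠ i + 1
    omega
  have ha3 : applyAct (m+1) c2 (false, 0) =
      ((C (m+1) (i+1)).1, Function.update (fun _ => i) (0 : Fin (m+1)) (i + 1)) := by
    rw [applyAct_R, hr3]
  set t : List (Fin (m+1)) := (List.finRange m).map Fin.succ with ht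
  have haux := aux (m+1) i hi1 t (Function.update (fun _ => i) (0 : Fin (m+1)) (i + 1))
    ((List.nodup_finRange m).map (Fin.succ_injective m))
    (by simp [ht, Fin.succ_ne_zero, eq_comm])
    (by simp)
    (fun j hj => by
      have hj0 : j ≠ 0 := by
        obtain ⟨k, _, hk⟩ := List.mem_map.1 hj
        exact hk ▸ Fin.succ_ne_zero k
      rw [Function.update_of_ne hj0])
  have hmem : ∀ j : Fin (m+1), j ∈ t ↔ j ≠ 0 := by
    intro j
    constructor
    · intro hj h0
      obtain ⟨k, _, hk⟩ := List.mem_map.1 hj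
      exact Fin.succ_ne_zero k (hk.trans h0)
    · intro h0
      obtain ⟨k, hk⟩ := Fin.exists_succ_eq.2 h0
      exact List.mem_map.2 ⟨k, List.mem_finRange k, hk⟩
  have hfinal : ((C (m+1) (i+1)).1,
      fun j => if j ∈ t then i + 1 else Function.update (fun _ => i) (0 : Fin (m+1)) (i+1) j)
      = C (m+1) (i + 1) := by
    refine Prod.ext rfl ?_
    show (fun j => if j ∈ t then i + 1
        else Function.update (fun _ => i) (0 : Fin (m+1)) (i+1) j) = fun _ => i + 1
    funext j
    by_cases hj0 : j = 0
    · subst hj0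
      rw [if_neg (fun h => ((hmem 0).1 h) rfl), Function.update_self]
    · rw [if_pos ((hmem j).2 hj0)]
  constructor
  · refine ⟨he1, ?_⟩
    rw [ha1]
    refine ⟨he2, ?_⟩
    rw [ha2, hfr]
    simp only [List.map_cons]
    refine ⟨he3, ?_⟩
    rw [ha3]
    exact haux.1
  · rw [run_cons, ha1, run_cons, ha2, hfr]
    simp only [List.map_cons]
    rw [run_cons, ha3, haux.2, hfinal]

end TEStar
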